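/- Let d₁,…,d_c > 0, α₁,…,α_c > 0 with Σα_i = 1, and β > 0. For nonempty H ⊆ {1,…,c} define d_H² = (β + Σ_{j∈H} α_j)/(Σ_{j∈H} α_j/d_j²). If H satisfies d_i² < d_H² for all i ∈ H and d_i² ≥ d_H² for all i ∉ H, then the values u_i = (α_i/β)(d_H²/d_i² − 1) for i ∈ H and u_i = 0 for i ∉ H satisfy u_i ≥ 0 for all i and Σ_{i=1}^c u_i = 1. -/

import Mathlib

theorem stmt12 (c : ℕ) (d α : Fin c → ℝ) (β : ℝ)
    (hd : ∀ i, 0 < d i) (hα : ∀ i, 0 < α i) (hαsum : ∑ i, α i = 1) (hβ : 0 < β)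
    (H : Finset (Fin c)) (hH : H.Nonempty)
    (dH2 : ℝ) (hdH2 : dH2 = (β + ∑ j ∈ H, α j) / (∑ j ∈ H, α j / (d j) ^ 2))
    (hin : ∀ i ∈ H, (d i) ^ 2 < dH2) (hout : ∀ i ∉ H, (d i) ^ 2 ≥ dH2)
    (u : Fin c → ℝ)
    (hu : ∀ i, u i = if i ∈ H then (α i / β) * (dH2 / (d i) ^ 2 - 1) else 0) :
    (∀ i, 0 ≤ u i) ∧ ∑ i, u i = 1 := by
  have hd2 : ∀ i, 0 < (d i) ^ 2 := fun i => pow_pos (hd i) 2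
  have hdenom : 0 < ∑ j ∈ H, α j / (d j) ^ 2 :=
    Finset.sum_pos (fun j _ => div_pos (hα j) (hd2 j)) hH
  constructor
  · intro i
    rw [hu i]
    by_cases h : i ∈ H
    · simp only [h, if_true]
      have h1 : (1 : ℝ) ≤ dH2 / (d i) ^ 2 :=
        (one_le_div (hd2 i)).2 (le_of_lt (hin i h))
      have := div_pos (hα i) hβ
      nlinarith
    · simp [h]
  · have key : ∑ i ∈ H, u i = 1 := by
      have : ∑ i ∈ H, u i = (1 / β) * (dH2 * (∑ j ∈ H, α j / (d j) ^ 2) - ∑ j ∈ H, α j) := by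
        rw [Finset.mul_sum, ← Finset.sum_sub_distrib, Finset.mul_sum]
        apply Finset.sum_congr rfl
        intro i hi
        rw [hu i]
        simp only [hi, if_true]
        field_simp
      rw [this, hdH2, div_mul_cancel₀ _ (ne_of_gt hdenom)]
      field_simp
      ring
    rw [← Finset.sum_subset (Finset.subset_univ H)]
    · exact key
    · intro i _ hi
      rw [hu i]
      simp [hi]
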